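/- arXiv:1612.02788 — 3 statements merged into one kernel-verified Lean document; each statement's English description precedes it below -/
import Mathlib

section
/- There exist absolute constants C > 0 and c ∈ ℕ such that the following holds for all positive integers d ≤ n. Let A ⊆ {0,1}^n and B ⊆ {-1,0,1}^n be sets of vectors such that (i) every b ∈ B has exactly d nonzero entries, and (ii) for all a, a' ∈ A and b, b' ∈ B, if a + b = a' + b' (addition in ℤ^n) then a = a' and b = b'. Then |A| · |B| ≤ C · n^c · 2^n · binomial(n, ⌈d/2⌉). -/
open Finset

private lemma choose_mono_half (n : ℕ) : ∀ l j, j ≤ l → 2 * l ≤ n + 1 → n.choose j ≤ n.choose l := by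
  intro l
  induction l with
  | zero => intro j hj _; simp [Nat.le_zero.mp hj]
  | succ m ih =>
    intro j hj hl
    rcases Nat.lt_or_ge j (m + 1) with h | h
    · have h1 : n.choose j ≤ n.choose m := ih j (by omega) (by omega)
      have h2 : n.choose m ≤ n.choose (m + 1) := by
        rcases (by omega : 2 * m + 2 ≤ n ∨ 2 * m + 1 = n) with h3 | h3
        · exact Nat.choose_le_succ_of_lt_half_left (by omega)
        · have h4 : m + 1 ≤ n := by omega
          have h5 := Nat.choose_symm h4
          have h6 : n - (m + 1) = m := by omega
          rw [h6] at h5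
          omega
      omega
    · have hj' : j = m + 1 := by omega
      subst hj'; exact le_rfl

private lemma fiber_bound1 (n d r : ℕ)
    (A B : Finset (Fin n → ℤ))
    (hA : ∀ a ∈ A, ∀ i, a i = 0 ∨ a i = 1)
    (hB : ∀ b ∈ B, ∀ i, b i = -1 ∨ b i = 0 ∨ b i = 1)
    (huniq : ∀ a ∈ A, ∀ a' ∈ A, ∀ b ∈ B, ∀ b' ∈ B, a + b = a' + b' → a = a' ∧ b = b') :
    ((A ×ˢ B).filter (fun p => (univ.filter (fun i => p.1 i + p.2 i = -1 ∨ p.1 i + p.2 i = 2)).card = r)).card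
      ≤ n.choose r * 2 ^ n := by
  classical
  have hcard : ((univ.powersetCard r (α := Fin n)) ×ˢ (univ : Finset (Fin n → Bool))).card
      = n.choose r * 2 ^ n := by
    rw [Finset.card_product, Finset.card_powersetCard, Finset.card_univ, Fintype.card_fin,
      Finset.card_univ]
    simp [Fintype.card_fun]
  rw [← hcard]
  apply Finset.card_le_card_of_injOn
    (fun p => (univ.filter (fun i => p.1 i + p.2 i = -1 ∨ p.1 i + p.2 i = 2),
      fun i => decide (1 ≤ p.1 i + p.2 i)))
  · intro p hp
    simp only [Finset.mem_coe, Finset.mem_filter] at hp ⊢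
    rw [Finset.mem_product]
    exact ⟨Finset.mem_powersetCard.mpr ⟨Finset.subset_univ _, hp.2⟩, Finset.mem_univ _⟩
  · intro p hp q hq heq
    simp only [Finset.mem_coe, Finset.mem_filter, Finset.mem_product] at hp hq
    have hS : (univ.filter (fun i => p.1 i + p.2 i = -1 ∨ p.1 i + p.2 i = 2))
        = (univ.filter (fun i => q.1 i + q.2 i = -1 ∨ q.1 i + q.2 i = 2)) :=
      congrArg Prod.fst heq
    have hg := congrArg Prod.snd heq
    have hap := hA p.1 hp.1.1
    have hbp := hB p.2 hp.1.2
    have haq := hA q.1 hq.1.1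
    have hbq := hB q.2 hq.1.2
    have hsum : p.1 + p.2 = q.1 + q.2 := by
      funext i
      have hi : (p.1 i + p.2 i = -1 ∨ p.1 i + p.2 i = 2) ↔
          (q.1 i + q.2 i = -1 ∨ q.1 i + q.2 i = 2) := by
        have := Finset.ext_iff.mp hS i
        simpa only [mem_filter, mem_univ, true_and] using this
      have hgi := congrFun hg i
      rw [decide_eq_decide] at hgi
      have h1 := hap i; have h2 := hbp i; have h3 := haq i; have h4 := hbq i
      simp only [Pi.add_apply]
      omega
    obtain ⟨e1, e2⟩ := huniq p.1 hp.1.1 q.1 hq.1.1 p.2 hp.1.2 q.2 hq.1.2 hsum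
    exact Prod.ext e1 e2

private lemma fiber_bound2 (n d r : ℕ)
    (A B : Finset (Fin n → ℤ))
    (hA : ∀ a ∈ A, ∀ i, a i = 0 ∨ a i = 1)
    (hB : ∀ b ∈ B, ∀ i, b i = -1 ∨ b i = 0 ∨ b i = 1)
    (hBd : ∀ b ∈ B, (Finset.univ.filter (fun i => b i ≠ 0)).card = d)
    (huniq : ∀ a ∈ A, ∀ a' ∈ A, ∀ b ∈ B, ∀ b' ∈ B, a + b = a' + b' → a = a' ∧ b = b') :
    ((A ×ˢ B).filter (fun p => (univ.filter (fun i => p.1 i + p.2 i = -1 ∨ p.1 i + p.2 i = 2)).card = r)).card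
      ≤ n.choose (d - r) * 2 ^ n := by
  classical
  have hcard : ((univ.powersetCard (d - r) (α := Fin n)) ×ˢ (univ : Finset (Fin n → Bool))).card
      = n.choose (d - r) * 2 ^ n := by
    rw [Finset.card_product, Finset.card_powersetCard, Finset.card_univ, Fintype.card_fin,
      Finset.card_univ]
    simp [Fintype.card_fun]
  rw [← hcard]
  apply Finset.card_le_card_of_injOn
    (fun p => (univ.filter (fun i => (1 - p.1 i) + p.2 i = -1 ∨ (1 - p.1 i) + p.2 i = 2),
      fun i => decide (1 ≤ (1 - p.1 i) + p.2 i)))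
  · intro p hp
    simp only [Finset.mem_coe, Finset.mem_filter, Finset.mem_product] at hp
    have ha := hA p.1 hp.1.1
    have hb := hB p.2 hp.1.2
    have hkey : ∀ i : Fin n, ((p.2 i ≠ 0) ↔
          ((p.1 i + p.2 i = -1 ∨ p.1 i + p.2 i = 2) ∨
            ((1 - p.1 i) + p.2 i = -1 ∨ (1 - p.1 i) + p.2 i = 2))) ∧
        ¬((p.1 i + p.2 i = -1 ∨ p.1 i + p.2 i = 2) ∧
            ((1 - p.1 i) + p.2 i = -1 ∨ (1 - p.1 i) + p.2 i = 2)) := by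
      intro i
      have h1 := ha i; have h2 := hb i
      constructor
      · omega
      · omega
    have hunion : (univ.filter (fun i => p.2 i ≠ 0)) =
        (univ.filter (fun i => p.1 i + p.2 i = -1 ∨ p.1 i + p.2 i = 2)) ∪
          (univ.filter (fun i => (1 - p.1 i) + p.2 i = -1 ∨ (1 - p.1 i) + p.2 i = 2)) := by
      ext i
      simp only [mem_filter, mem_union, mem_univ, true_and]
      exact (hkey i).1
    have hdisj : Disjoint
        (univ.filter (fun i => p.1 i + p.2 i = -1 ∨ p.1 i + p.2 i = 2))
        (univ.filter (fun i => (1 - p.1 i) + p.2 i = -1 ∨ (1 - p.1 i) + p.2 i = 2)) := by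
      rw [Finset.disjoint_left]
      intro i h1 h2
      simp only [mem_filter, mem_univ, true_and] at h1 h2
      exact (hkey i).2 ⟨h1, h2⟩
    have hd2 : d = r + (univ.filter (fun i => (1 - p.1 i) + p.2 i = -1 ∨ (1 - p.1 i) + p.2 i = 2)).card := by
      have := hBd p.2 hp.1.2
      rw [hunion, Finset.card_union_of_disjoint hdisj, hp.2] at this
      omega
    rw [Finset.mem_coe, Finset.mem_product]
    refine ⟨Finset.mem_powersetCard.mpr ⟨Finset.subset_univ _, by dsimp only; omega⟩, Finset.mem_univ _⟩
  · intro p hp q hq heq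
    simp only [Finset.mem_coe, Finset.mem_filter, Finset.mem_product] at hp hq
    have hS : (univ.filter (fun i => (1 - p.1 i) + p.2 i = -1 ∨ (1 - p.1 i) + p.2 i = 2))
        = (univ.filter (fun i => (1 - q.1 i) + q.2 i = -1 ∨ (1 - q.1 i) + q.2 i = 2)) :=
      congrArg Prod.fst heq
    have hg := congrArg Prod.snd heq
    have hap := hA p.1 hp.1.1
    have hbp := hB p.2 hp.1.2
    have haq := hA q.1 hq.1.1
    have hbq := hB q.2 hq.1.2
    have hsum : q.1 + p.2 = p.1 + q.2 := by
      funext i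
      have hi : ((1 - p.1 i) + p.2 i = -1 ∨ (1 - p.1 i) + p.2 i = 2) ↔
          ((1 - q.1 i) + q.2 i = -1 ∨ (1 - q.1 i) + q.2 i = 2) := by
        have := Finset.ext_iff.mp hS i
        simpa only [mem_filter, mem_univ, true_and] using this
      have hgi := congrFun hg i
      rw [decide_eq_decide] at hgi
      have h1 := hap i; have h2 := hbp i; have h3 := haq i; have h4 := hbq i
      simp only [Pi.add_apply]
      omega
    obtain ⟨e1, e2⟩ := huniq q.1 hq.1.1 p.1 hp.1.1 p.2 hp.1.2 q.2 hq.1.2 hsum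
    exact Prod.ext e1.symm e2

/-- UDCP-style bound with absolute constants. -/
theorem stmt0 :
    ∃ (C : ℝ) (c : ℕ), 0 < C ∧
      ∀ (n d : ℕ), 0 < d → d ≤ n →
        ∀ (A B : Finset (Fin n → ℤ)),
          (∀ a ∈ A, ∀ i, a i = 0 ∨ a i = 1) →
          (∀ b ∈ B, ∀ i, b i = -1 ∨ b i = 0 ∨ b i = 1) →
          (∀ b ∈ B, (Finset.univ.filter (fun i => b i ≠ 0)).card = d) →
          (∀ a ∈ A, ∀ a' ∈ A, ∀ b ∈ B, ∀ b' ∈ B, a + b = a' + b' → a = a' ∧ b = b') →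
          (A.card * B.card : ℝ) ≤ C * n ^ c * 2 ^ n * n.choose ((d + 1) / 2) := by
  classical
  refine ⟨2, 1, by norm_num, ?_⟩
  intro n d hd hdn A B hA hB hBd huniq
  have key : A.card * B.card ≤ 2 * n * (2 ^ n * n.choose ((d + 1) / 2)) := by
    have hmem : ∀ p ∈ A ×ˢ B,
        (univ.filter (fun i => p.1 i + p.2 i = -1 ∨ p.1 i + p.2 i = 2)).card ∈ Finset.range (d + 1) := by
      intro p hp
      rw [Finset.mem_product] at hp
      have ha := hA p.1 hp.1
      have hb := hB p.2 hp.2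
      have hsub : (univ.filter (fun i => p.1 i + p.2 i = -1 ∨ p.1 i + p.2 i = 2)) ⊆
          (univ.filter (fun i => p.2 i ≠ 0)) := by
        intro i hi
        simp only [mem_filter, mem_univ, true_and] at hi ⊢
        have h1 := ha i; have h2 := hb i
        omega
      have := Finset.card_le_card hsub
      rw [hBd p.2 hp.2] at this
      simp only [Finset.mem_range]
      omega
    have hfib := Finset.card_eq_sum_card_fiberwise hmem
    rw [Finset.card_product] at hfib
    rw [hfib]
    have hterm : ∀ r ∈ Finset.range (d + 1),
        ((A ×ˢ B).filter (fun p =>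
          (univ.filter (fun i => p.1 i + p.2 i = -1 ∨ p.1 i + p.2 i = 2)).card = r)).card
        ≤ 2 ^ n * n.choose ((d + 1) / 2) := by
      intro r hr
      rw [Finset.mem_range] at hr
      rcases le_total r (d - r) with hc | hc
      · have h1 := fiber_bound1 n d r A B hA hB huniq
        have h2 : n.choose r ≤ n.choose ((d + 1) / 2) :=
          choose_mono_half n ((d + 1) / 2) r (by omega) (by omega)
        calc _ ≤ n.choose r * 2 ^ n := h1
          _ ≤ n.choose ((d + 1) / 2) * 2 ^ n := Nat.mul_le_mul_right _ h2
          _ = 2 ^ n * n.choose ((d + 1) / 2) := Nat.mul_comm _ _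
      · have h1 := fiber_bound2 n d r A B hA hB hBd huniq
        have h2 : n.choose (d - r) ≤ n.choose ((d + 1) / 2) :=
          choose_mono_half n ((d + 1) / 2) (d - r) (by omega) (by omega)
        calc _ ≤ n.choose (d - r) * 2 ^ n := h1
          _ ≤ n.choose ((d + 1) / 2) * 2 ^ n := Nat.mul_le_mul_right _ h2
          _ = 2 ^ n * n.choose ((d + 1) / 2) := Nat.mul_comm _ _
    calc ∑ r ∈ Finset.range (d + 1), ((A ×ˢ B).filter (fun p =>
            (univ.filter (fun i => p.1 i + p.2 i = -1 ∨ p.1 i + p.2 i = 2)).card = r)).card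
        ≤ ∑ _r ∈ Finset.range (d + 1), 2 ^ n * n.choose ((d + 1) / 2) :=
          Finset.sum_le_sum hterm
      _ = (d + 1) * (2 ^ n * n.choose ((d + 1) / 2)) := by
          rw [Finset.sum_const, Finset.card_range, smul_eq_mul]
      _ ≤ 2 * n * (2 ^ n * n.choose ((d + 1) / 2)) := by
          have : d + 1 ≤ 2 * n := by omega
          exact Nat.mul_le_mul_right _ this
  have hcast : ((A.card * B.card : ℕ) : ℝ) ≤ ((2 * n * (2 ^ n * n.choose ((d + 1) / 2)) : ℕ) : ℝ) :=
    Nat.cast_le.mpr key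
  push_cast at hcast
  calc (A.card * B.card : ℝ) = ((A.card : ℝ) * B.card) := by push_cast; ring
    _ ≤ 2 * n * (2 ^ n * n.choose ((d + 1) / 2)) := hcast
    _ = 2 * (n : ℝ) ^ 1 * 2 ^ n * n.choose ((d + 1) / 2) := by ring
end

section
/- Let m be a positive integer and w ∈ ℤ^m. Then the number of pairs (x,y) ∈ {0,1}^m × {0,1}^m with ⟨w,x⟩ = ⟨w,y⟩ equals Σ_{d=0}^{m} |{v ∈ {-1,0,1}^m : ⟨w,v⟩ = 0 and |supp(v)| = d}| · 2^{m−d}. -/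
/-- the number of pairs of 0/1-vectors with equal weighted sums
equals the sum over d of the number of {-1,0,1}-vectors with inner product 0
and support size d, times 2^(m-d). -/
theorem stmt7 (m : ℕ) (hm : 0 < m) (w : Fin m → ℤ) :
    (((Finset.univ : Finset ((Fin m → Bool) × (Fin m → Bool))).filter
      (fun p => ∑ i, (if p.1 i then w i else 0) = ∑ i, (if p.2 i then w i else 0))).card)
    = ∑ d ∈ Finset.range (m + 1),
        {v : Fin m → ℤ | (∀ i, v i = -1 ∨ v i = 0 ∨ v i = 1) ∧ (∑ i, w i * v i = 0) ∧
          (Finset.univ.filter (fun i => v i ≠ 0)).card = d}.ncard * 2 ^ (m - d) := by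
  classical
  set f : ((Fin m → Bool) × (Fin m → Bool)) → (Fin m → ℤ) :=
    fun p i => (if p.1 i then 1 else 0) - (if p.2 i then 1 else 0) with hf
  set c : (Fin m → ℤ) → ℕ := fun v => (Finset.univ.filter (fun i => v i ≠ 0)).card with hc
  set T : Finset (Fin m → ℤ) :=
    (Fintype.piFinset (fun _ : Fin m => ({-1,0,1} : Finset ℤ))).filter
      (fun v => ∑ i, w i * v i = 0) with hT
  have hTmem : ∀ v, v ∈ T ↔ ((∀ i, v i = -1 ∨ v i = 0 ∨ v i = 1) ∧ ∑ i, w i * v i = 0) := by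
    intro v
    simp [hT, Fintype.mem_piFinset]
  -- RHS sets as finsets
  have hset : ∀ d, {v : Fin m → ℤ | (∀ i, v i = -1 ∨ v i = 0 ∨ v i = 1) ∧ (∑ i, w i * v i = 0) ∧
          (Finset.univ.filter (fun i => v i ≠ 0)).card = d}.ncard
      = (T.filter (fun v => c v = d)).card := by
    intro d
    rw [← Set.ncard_coe_finset]
    congr 1
    ext v
    simp only [Finset.coe_filter, Set.mem_setOf_eq, hTmem, hc]
    tauto
  -- key fact about f p sums
  have hsum : ∀ p : ((Fin m → Bool) × (Fin m → Bool)),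
      ∑ i, w i * f p i = (∑ i, (if p.1 i then w i else 0)) - ∑ i, (if p.2 i then w i else 0) := by
    intro p
    rw [← Finset.sum_sub_distrib]
    refine Finset.sum_congr rfl fun i _ => ?_
    simp only [hf]
    by_cases h1 : p.1 i <;> by_cases h2 : p.2 i <;> simp [h1, h2]
  set P := ((Finset.univ : Finset ((Fin m → Bool) × (Fin m → Bool))).filter
      (fun p => ∑ i, (if p.1 i then w i else 0) = ∑ i, (if p.2 i then w i else 0))) with hP
  have hmaps : ∀ p ∈ P, f p ∈ T := by
    intro p hp
    rw [hTmem]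
    constructor
    · intro i
      simp only [hf]
      by_cases h1 : p.1 i <;> by_cases h2 : p.2 i <;> simp [h1, h2]
    · rw [hsum]
      simp only [hP, Finset.mem_filter] at hp
      omega
  have h1 : P.card = ∑ v ∈ T, (P.filter (fun p => f p = v)).card :=
    Finset.card_eq_sum_card_fiberwise hmaps
  -- fiber cardinality
  have h2 : ∀ v ∈ T, (P.filter (fun p => f p = v)).card = 2 ^ (m - c v) := by
    intro v hv
    have hPfil : P.filter (fun p => f p = v) = Finset.univ.filter (fun p => f p = v) := by
      ext p
      simp only [hP, Finset.filter_filter, Finset.mem_filter, Finset.mem_univ, true_and]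
      constructor
      · tauto
      · intro hfp
        refine ⟨?_, hfp⟩
        have := (hTmem v).mp hv
        have h0 : ∑ i, w i * f p i = 0 := by rw [hfp]; exact this.2
        rw [hsum] at h0
        omega
    rw [hPfil]
    have hcard : (Finset.univ.filter (fun p => f p = v)).card
        = Fintype.card {p : ((Fin m → Bool) × (Fin m → Bool)) // f p = v} :=
      (Fintype.card_subtype _).symm
    rw [hcard]
    -- transport to pi type
    have e1 : {p : ((Fin m → Bool) × (Fin m → Bool)) // f p = v}
        ≃ {g : Fin m → Bool × Bool // ∀ i, ((if (g i).1 then (1:ℤ) else 0) - (if (g i).2 then 1 else 0)) = v i} := by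
      refine (Equiv.subtypeEquiv (Equiv.arrowProdEquivProdArrow (Fin m) (fun _ => Bool) (fun _ => Bool)).symm ?_)
      intro p
      constructor
      · intro hp i
        have := congrFun hp i
        simp [hf, Equiv.arrowProdEquivProdArrow] at this ⊢
        convert this using 3 <;> rfl
      · intro hp
        funext i
        have hpi := hp i
        simp [hf, Equiv.arrowProdEquivProdArrow] at hpi ⊢
        convert hpi using 3 <;> rfl
    have e2 : {g : Fin m → Bool × Bool // ∀ i, ((if (g i).1 then (1:ℤ) else 0) - (if (g i).2 then 1 else 0)) = v i}
        ≃ ∀ i, {q : Bool × Bool // ((if q.1 then (1:ℤ) else 0) - (if q.2 then 1 else 0)) = v i} :=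
      Equiv.subtypePiEquivPi (β := fun _ : Fin m => Bool × Bool) (p := fun i q => ((if q.1 then (1:ℤ) else 0) - (if q.2 then 1 else 0)) = v i)
    rw [Fintype.card_congr (e1.trans e2), Fintype.card_pi]
    have hvals := ((hTmem v).mp hv).1
    have hfac : ∀ i, Fintype.card {q : Bool × Bool // ((if q.1 then (1:ℤ) else 0) - (if q.2 then 1 else 0)) = v i}
        = if v i = 0 then 2 else 1 := by
      intro i
      rcases hvals i with h | h | h <;> rw [h] <;> norm_num <;> decide
    simp_rw [hfac]
    have hprod : (∏ x : Fin m, if v x = 0 then (2:ℕ) else 1)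
        = 2 ^ (Finset.univ.filter (fun i => v i = 0)).card := by
      rw [Finset.prod_ite, Finset.prod_const, Finset.prod_const_one, mul_one]
    rw [hprod]
    congr 1
    have := Finset.card_filter_add_card_filter_not
      (s := (Finset.univ : Finset (Fin m))) (p := fun i => v i = 0)
    simp only [Finset.card_univ, Fintype.card_fin] at this
    simp only [hc, ne_eq]
    omega
  calc P.card = ∑ v ∈ T, 2 ^ (m - c v) := by rw [h1]; exact Finset.sum_congr rfl h2
    _ = ∑ d ∈ Finset.range (m+1), ∑ v ∈ T.filter (fun v => c v = d), 2 ^ (m - c v) := by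
        refine (Finset.sum_fiberwise_of_maps_to (fun v _ => Finset.mem_range.mpr ?_) _).symm
        have : c v ≤ m := by
          simpa using (Finset.card_filter_le (Finset.univ : Finset (Fin m)) (fun i => v i ≠ 0))
        omega
    _ = ∑ d ∈ Finset.range (m+1), (T.filter (fun v => c v = d)).card * 2 ^ (m - d) := by
        refine Finset.sum_congr rfl fun d _ => ?_
        rw [Finset.sum_congr rfl (fun v hv => by rw [(Finset.mem_filter.mp hv).2]),
            Finset.sum_const, smul_eq_mul]
    _ = _ := by
        refine Finset.sum_congr rfl fun d _ => ?_
        rw [hset d]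
end

section
/- Let n be an even positive integer and w ∈ ℤ^n. For 0 ≤ d ≤ n, let C_d = {x ∈ {-1,0,1}^n : ⟨w,x⟩ = 0 and |supp(x)| = d}. Let L be a uniformly random subset of [n] of size n/2, and let P^L = {(x,y) : x,y : L → {0,1}, Σ_{i∈L} w_i x_i = Σ_{i∈L} w_i y_i}. Then E[|P^L|] ≤ Σ_{d=0}^{n/2} |C_d| · (binomial(n−d, n/2−d) / binomial(n, n/2)) · 2^{n/2−d}. -/
open Finset

variable {α : Type*} [Fintype α] [DecidableEq α]

/-- Number of `k`-subsets of `univ` containing a fixed set `T` of card `≤ k`. -/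
lemma aux_card_supersets (k : ℕ) (T : Finset α) (h : T.card ≤ k) :
    (((univ : Finset α).powersetCard k).filter (fun L => T ⊆ L)).card
      = (Fintype.card α - T.card).choose (k - T.card) := by
  have : (((univ : Finset α).powersetCard k).filter (fun L => T ⊆ L)).card
      = (Tᶜ.powersetCard (k - T.card)).card := by
    apply card_nbij' (i := fun L => L \ T) (j := fun M => M ∪ T)
    · intro L hL
      simp only [mem_coe, mem_filter, mem_powersetCard] at hL
      obtain ⟨⟨-, hcard⟩, hTL⟩ := hL
      rw [mem_coe, mem_powersetCard]
      constructor
      · intro i hi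
        simp only [mem_sdiff] at hi
        simp [mem_compl, hi.2]
      · rw [card_sdiff_of_subset hTL, hcard]
    · intro M hM
      rw [mem_coe, mem_powersetCard] at hM
      obtain ⟨hMc, hcard⟩ := hM
      have hdisj : Disjoint M T := by
        rw [disjoint_iff_inter_eq_empty]
        ext i
        simp only [mem_inter, notMem_empty, iff_false]
        rintro ⟨hiM, hiT⟩
        have := hMc hiM
        simp [mem_compl, hiT] at this
      simp only [mem_coe, mem_filter, mem_powersetCard]
      refine ⟨⟨subset_univ _, ?_⟩, subset_union_right⟩
      rw [card_union_of_disjoint hdisj, hcard]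
      omega
    · intro L hL
      simp only [mem_coe, mem_filter, mem_powersetCard] at hL
      exact sdiff_union_of_subset hL.2
    · intro M hM
      rw [mem_coe, mem_powersetCard] at hM
      have hdisj : Disjoint M T := by
        rw [disjoint_iff_inter_eq_empty]
        ext i
        simp only [mem_inter, notMem_empty, iff_false]
        rintro ⟨hiM, hiT⟩
        have := hM.1 hiM
        simp [mem_compl, hiT] at this
      beta_reduce
      rw [union_sdiff_right]
      exact Finset.sdiff_eq_self_iff_disjoint.mpr hdisj
  rw [this, card_powersetCard, card_compl]

/-- Fiber count: pairs `(A, B)` of subsets of `L` with equal `w`-sums whose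
difference pattern is `(P, N)`. -/
lemma aux_fiber_card (w : α → ℤ) (L P N : Finset α) (hP : P ⊆ L) (hN : N ⊆ L)
    (hPN : Disjoint P N) (hs : ∑ i ∈ P, w i = ∑ i ∈ N, w i) :
    (((L.powerset ×ˢ L.powerset).filter
        (fun p => ∑ i ∈ p.1, w i = ∑ i ∈ p.2, w i)).filter
      (fun p => (p.1 \ p.2, p.2 \ p.1) = (P, N))).card
      = 2 ^ (L.card - (P ∪ N).card) := by
  have key : (((L.powerset ×ˢ L.powerset).filter
        (fun p => ∑ i ∈ p.1, w i = ∑ i ∈ p.2, w i)).filter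
      (fun p => (p.1 \ p.2, p.2 \ p.1) = (P, N))).card
      = ((L \ (P ∪ N)).powerset).card := by
    apply card_nbij' (i := fun p => p.1 ∩ p.2) (j := fun S => (P ∪ S, N ∪ S))
    · rintro ⟨A, B⟩ hp
      simp only [mem_coe, mem_filter, mem_product, mem_powerset, Prod.mk.injEq] at hp
      obtain ⟨⟨⟨hA, hB⟩, -⟩, hPe, hNe⟩ := hp
      rw [mem_coe, mem_powerset]
      intro i hi
      simp only [mem_inter] at hi
      simp only [mem_sdiff, mem_union]
      refine ⟨hA hi.1, ?_⟩
      rintro (hiP | hiN)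
      · rw [← hPe] at hiP; simp only [mem_sdiff] at hiP; exact hiP.2 hi.2
      · rw [← hNe] at hiN; simp only [mem_sdiff] at hiN; exact hiN.2 hi.1
    · intro S hS
      rw [mem_coe, mem_powerset] at hS
      have hSP : Disjoint S P := by
        rw [disjoint_left]; intro i hiS hiP
        have := hS hiS; simp only [mem_sdiff, mem_union] at this; exact this.2 (Or.inl hiP)
      have hSN : Disjoint S N := by
        rw [disjoint_left]; intro i hiS hiN
        have := hS hiS; simp only [mem_sdiff, mem_union] at this; exact this.2 (Or.inr hiN)
      have hSL : S ⊆ L := hS.trans sdiff_subset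
      simp only [mem_coe, mem_filter, mem_product, mem_powerset, Prod.mk.injEq]
      refine ⟨⟨⟨union_subset hP hSL, union_subset hN hSL⟩, ?_⟩, ?_, ?_⟩
      · rw [sum_union hSP.symm, sum_union hSN.symm, hs]
      · ext i
        simp only [mem_sdiff, mem_union]
        constructor
        · rintro ⟨hiP | hiS, hni⟩
          · exact hiP
          · exact absurd (Or.inr hiS) hni
        · intro hiP
          refine ⟨Or.inl hiP, ?_⟩
          rintro (hiN | hiS)
          · exact (disjoint_left.mp hPN) hiP hiN
          · exact (disjoint_left.mp hSP) hiS hiP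
      · ext i
        simp only [mem_sdiff, mem_union]
        constructor
        · rintro ⟨hiN | hiS, hni⟩
          · exact hiN
          · exact absurd (Or.inr hiS) hni
        · intro hiN
          refine ⟨Or.inl hiN, ?_⟩
          rintro (hiP | hiS)
          · exact (disjoint_left.mp hPN) hiP hiN
          · exact (disjoint_left.mp hSN) hiS hiN
    · rintro ⟨A, B⟩ hp
      simp only [mem_coe, mem_filter, mem_product, mem_powerset, Prod.mk.injEq] at hp
      obtain ⟨⟨⟨hA, hB⟩, -⟩, hPe, hNe⟩ := hp
      simp only [Prod.mk.injEq]
      constructor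
      · rw [← hPe]
        ext i; simp only [mem_union, mem_sdiff, mem_inter]; tauto
      · rw [← hNe]
        ext i; simp only [mem_union, mem_sdiff, mem_inter]; tauto
    · intro S hS
      rw [mem_coe, mem_powerset] at hS
      simp only
      ext i
      simp only [mem_inter, mem_union]
      constructor
      · rintro ⟨hiP | hiS, hiN | hiS'⟩
        · exact absurd hiN (disjoint_left.mp hPN hiP)
        · exact hiS'
        · exact hiS
        · exact hiS
      · intro hiS; exact ⟨Or.inr hiS, Or.inr hiS⟩
  rw [key, card_powerset, card_sdiff_of_subset (union_subset hP hN)]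

/-- Per-`L` count rewritten as a sum over disjoint equal-sum pairs. -/
lemma aux_perL (w : α → ℤ) (L : Finset α) :
    ((L.powerset ×ˢ L.powerset).filter
        (fun p => ∑ i ∈ p.1, w i = ∑ i ∈ p.2, w i)).card
    = ∑ q ∈ (L.powerset ×ˢ L.powerset).filter
        (fun q => Disjoint q.1 q.2 ∧ ∑ i ∈ q.1, w i = ∑ i ∈ q.2, w i),
        2 ^ (L.card - (q.1 ∪ q.2).card) := by
  rw [card_eq_sum_card_fiberwise (f := fun p => (p.1 \ p.2, p.2 \ p.1))
    (t := (L.powerset ×ˢ L.powerset).filter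
        (fun q => Disjoint q.1 q.2 ∧ ∑ i ∈ q.1, w i = ∑ i ∈ q.2, w i))]
  · apply sum_congr rfl
    rintro ⟨P, N⟩ hq
    simp only [mem_filter, mem_product, mem_powerset] at hq
    obtain ⟨⟨hP, hN⟩, hd, hsum⟩ := hq
    exact aux_fiber_card w L P N hP hN hd hsum
  · rintro ⟨A, B⟩ hp
    simp only [mem_coe, mem_filter, mem_product, mem_powerset] at hp ⊢
    obtain ⟨⟨hA, hB⟩, hsum⟩ := hp
    refine ⟨⟨sdiff_subset.trans hA, sdiff_subset.trans hB⟩, disjoint_sdiff_sdiff, ?_⟩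
    have h1 : ∑ i ∈ A \ B, w i + ∑ i ∈ A ∩ B, w i = ∑ i ∈ A, w i := by
      rw [← sum_union (disjoint_sdiff_inter A B)]
      congr 1
      ext i; simp only [mem_union, mem_sdiff, mem_inter]; tauto
    have h2 : ∑ i ∈ B \ A, w i + ∑ i ∈ B ∩ A, w i = ∑ i ∈ B, w i := by
      rw [← sum_union (disjoint_sdiff_inter B A)]
      congr 1
      ext i; simp only [mem_union, mem_sdiff, mem_inter]; tauto
    rw [inter_comm B A] at h2
    linarith

/-- The main counting identity over natural numbers. -/
lemma aux_main_count (n k : ℕ) (hk : k ≤ n) (w : Fin n → ℤ) :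
    ∑ L ∈ (univ : Finset (Fin n)).powersetCard k,
      ((L.powerset ×ˢ L.powerset).filter
        (fun p => ∑ i ∈ p.1, w i = ∑ i ∈ p.2, w i)).card
    = ∑ d ∈ Finset.range (k + 1),
        (((univ.powerset ×ˢ univ.powerset).filter
          (fun q : Finset (Fin n) × Finset (Fin n) =>
            Disjoint q.1 q.2 ∧ (∑ i ∈ q.1, w i = ∑ i ∈ q.2, w i) ∧
            (q.1 ∪ q.2).card = d)).card) * (n - d).choose (k - d) * 2 ^ (k - d) := by
  classical
  set G : Finset (Finset (Fin n) × Finset (Fin n)) :=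
    (univ.powerset ×ˢ univ.powerset).filter
      (fun q => Disjoint q.1 q.2 ∧ ∑ i ∈ q.1, w i = ∑ i ∈ q.2, w i) with hG
  have step1 : ∑ L ∈ (univ : Finset (Fin n)).powersetCard k,
      ((L.powerset ×ˢ L.powerset).filter
        (fun p => ∑ i ∈ p.1, w i = ∑ i ∈ p.2, w i)).card
      = ∑ L ∈ (univ : Finset (Fin n)).powersetCard k,
          ∑ q ∈ G, (if q.1 ∪ q.2 ⊆ L then 2 ^ (k - (q.1 ∪ q.2).card) else 0) := by
    apply sum_congr rfl
    intro L hL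
    rw [mem_powersetCard] at hL
    rw [aux_perL w L, hL.2]
    have hset : (L.powerset ×ˢ L.powerset).filter
        (fun q => Disjoint q.1 q.2 ∧ ∑ i ∈ q.1, w i = ∑ i ∈ q.2, w i)
        = G.filter (fun q => q.1 ∪ q.2 ⊆ L) := by
      ext q
      simp only [hG, mem_filter, mem_product, mem_powerset, union_subset_iff]
      constructor
      · rintro ⟨⟨h1, h2⟩, h3⟩
        exact ⟨⟨⟨subset_univ _, subset_univ _⟩, h3⟩, h1, h2⟩
      · rintro ⟨⟨-, h3⟩, h1, h2⟩
        exact ⟨⟨h1, h2⟩, h3⟩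
    rw [hset, sum_filter]
  rw [step1, Finset.sum_comm]
  have step2 : ∀ q ∈ G,
      ∑ L ∈ (univ : Finset (Fin n)).powersetCard k,
        (if q.1 ∪ q.2 ⊆ L then 2 ^ (k - (q.1 ∪ q.2).card) else 0)
      = (((univ : Finset (Fin n)).powersetCard k).filter
          (fun L => q.1 ∪ q.2 ⊆ L)).card * 2 ^ (k - (q.1 ∪ q.2).card) := by
    intro q _
    rw [← sum_filter, sum_const, smul_eq_mul]
  rw [sum_congr rfl step2]
  have hmaps : ∀ q ∈ G, (q.1 ∪ q.2).card ∈ Finset.range (n + 1) := by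
    intro q _
    rw [mem_range, Nat.lt_succ_iff]
    calc (q.1 ∪ q.2).card ≤ (univ : Finset (Fin n)).card := card_le_card (subset_univ _)
    _ = n := by rw [card_univ, Fintype.card_fin]
  rw [← Finset.sum_fiberwise_of_maps_to hmaps]
  have step3 : ∀ d ∈ Finset.range (n + 1),
      ∑ q ∈ G.filter (fun q => (q.1 ∪ q.2).card = d),
        (((univ : Finset (Fin n)).powersetCard k).filter
          (fun L => q.1 ∪ q.2 ⊆ L)).card * 2 ^ (k - (q.1 ∪ q.2).card)
      = if d ≤ k then
          (G.filter (fun q => (q.1 ∪ q.2).card = d)).card * (n - d).choose (k - d) * 2 ^ (k - d)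
        else 0 := by
    intro d _
    by_cases hd : d ≤ k
    · rw [if_pos hd]
      have : ∀ q ∈ G.filter (fun q => (q.1 ∪ q.2).card = d),
          (((univ : Finset (Fin n)).powersetCard k).filter
            (fun L => q.1 ∪ q.2 ⊆ L)).card * 2 ^ (k - (q.1 ∪ q.2).card)
          = (n - d).choose (k - d) * 2 ^ (k - d) := by
        intro q hq
        rw [mem_filter] at hq
        rw [hq.2]
        congr 1
        rw [aux_card_supersets k (q.1 ∪ q.2) (hq.2 ▸ hd), hq.2, Fintype.card_fin]
      rw [sum_congr rfl this, sum_const, smul_eq_mul, mul_assoc]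
    · rw [if_neg hd]
      apply Finset.sum_eq_zero
      intro q hq
      rw [mem_filter] at hq
      have : (((univ : Finset (Fin n)).powersetCard k).filter
          (fun L => q.1 ∪ q.2 ⊆ L)) = ∅ := by
        rw [filter_eq_empty_iff]
        intro L hL hsub
        rw [mem_powersetCard] at hL
        have := card_le_card hsub
        rw [hq.2, hL.2] at this
        omega
      rw [this, card_empty, zero_mul]
  rw [sum_congr rfl step3]
  rw [← Finset.sum_subset (Finset.range_subset_range.mpr (by omega : k + 1 ≤ n + 1))
    (fun d _ hd => by rw [if_neg (by rw [mem_range] at hd; omega)])]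
  apply sum_congr rfl
  intro d hd
  rw [mem_range] at hd
  rw [if_pos (by omega)]
  have hfeq : G.filter (fun q => (q.1 ∪ q.2).card = d)
      = (univ.powerset ×ˢ univ.powerset).filter
          (fun q : Finset (Fin n) × Finset (Fin n) =>
            Disjoint q.1 q.2 ∧ (∑ i ∈ q.1, w i = ∑ i ∈ q.2, w i) ∧
            (q.1 ∪ q.2).card = d) := by
    ext q
    simp only [hG, mem_filter, mem_product, mem_powerset]
    tauto
  rw [hfeq]

/-- Cardinality of `C_d` equals the number of disjoint equal-sum pairs of total card `d`. -/
lemma aux_ncard (n : ℕ) (w : Fin n → ℤ) (d : ℕ) :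
    ({x : Fin n → ℤ | (∀ i, x i = -1 ∨ x i = 0 ∨ x i = 1) ∧ (∑ i, w i * x i = 0) ∧
        (Finset.univ.filter (fun i => x i ≠ 0)).card = d}.ncard)
    = ((univ.powerset ×ˢ univ.powerset).filter
          (fun q : Finset (Fin n) × Finset (Fin n) =>
            Disjoint q.1 q.2 ∧ (∑ i ∈ q.1, w i = ∑ i ∈ q.2, w i) ∧
            (q.1 ∪ q.2).card = d)).card := by
  classical
  set D : Finset (Finset (Fin n) × Finset (Fin n)) :=
    (univ.powerset ×ˢ univ.powerset).filter
      (fun q => Disjoint q.1 q.2 ∧ (∑ i ∈ q.1, w i = ∑ i ∈ q.2, w i) ∧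
        (q.1 ∪ q.2).card = d) with hD
  set f : Finset (Fin n) × Finset (Fin n) → (Fin n → ℤ) :=
    fun q => fun i => if i ∈ q.1 then 1 else if i ∈ q.2 then -1 else 0 with hf
  have hsum : ∀ P N : Finset (Fin n), Disjoint P N →
      ∑ i, w i * (if i ∈ P then (1:ℤ) else if i ∈ N then -1 else 0)
        = ∑ i ∈ P, w i - ∑ i ∈ N, w i := by
    intro P N hdisj
    rw [← Finset.sum_subset (subset_univ (P ∪ N)) (by
      intro i _ hi
      simp only [mem_union] at hi
      push_neg at hi
      simp [hi.1, hi.2])]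
    rw [sum_union hdisj]
    have h1 : ∑ i ∈ P, w i * (if i ∈ P then (1:ℤ) else if i ∈ N then -1 else 0)
        = ∑ i ∈ P, w i := sum_congr rfl (fun i hi => by simp [hi])
    have h2 : ∑ i ∈ N, w i * (if i ∈ P then (1:ℤ) else if i ∈ N then -1 else 0)
        = ∑ i ∈ N, -(w i) := sum_congr rfl (fun i hi => by
          rw [if_neg (disjoint_right.mp hdisj hi), if_pos hi]; ring)
    rw [h1, h2, Finset.sum_neg_distrib, ← sub_eq_add_neg]
  have hsupp : ∀ q : Finset (Fin n) × Finset (Fin n),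
      Finset.univ.filter (fun i => f q i ≠ 0) = q.1 ∪ q.2 := by
    intro q
    ext i
    simp only [hf, mem_filter, mem_univ, true_and, mem_union]
    split_ifs <;> simp [*]
  have hsetE : {x : Fin n → ℤ | (∀ i, x i = -1 ∨ x i = 0 ∨ x i = 1) ∧
        (∑ i, w i * x i = 0) ∧
        (Finset.univ.filter (fun i => x i ≠ 0)).card = d}
      = ↑(D.image f) := by
    ext x
    simp only [Set.mem_setOf_eq, coe_image, Set.mem_image, mem_coe]
    constructor
    · rintro ⟨htri, hzero, hcard⟩
      set P : Finset (Fin n) := Finset.univ.filter (fun i => x i = 1) with hP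
      set N : Finset (Fin n) := Finset.univ.filter (fun i => x i = -1) with hN
      have hdisj : Disjoint P N := by
        rw [disjoint_left]
        intro i hiP hiN
        simp only [hP, hN, mem_filter] at hiP hiN
        rw [hiP.2] at hiN
        norm_num at hiN
      have hfx : f (P, N) = x := by
        funext i
        rcases htri i with h | h | h
        · simp only [hf, hP, hN, mem_filter, mem_univ, true_and, h]
          norm_num
        · simp only [hf, hP, hN, mem_filter, mem_univ, true_and, h]
          norm_num
        · simp only [hf, hP, hN, mem_filter, mem_univ, true_and, h]
          norm_num
      have hun : P ∪ N = Finset.univ.filter (fun i => x i ≠ 0) := by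
        ext i
        simp only [hP, hN, mem_union, mem_filter, mem_univ, true_and]
        rcases htri i with h | h | h <;> simp [h]
      refine ⟨(P, N), ?_, hfx⟩
      simp only [hD, mem_filter, mem_product, mem_powerset]
      refine ⟨⟨subset_univ _, subset_univ _⟩, hdisj, ?_, ?_⟩
      · have hthis := hsum P N hdisj
        have hx : ∑ i, w i * (if i ∈ P then (1:ℤ) else if i ∈ N then -1 else 0)
            = ∑ i, w i * x i :=
          sum_congr rfl (fun i _ => congrArg (w i * ·) (congrFun hfx i))
        linarith
      · rw [hun, hcard]
    · rintro ⟨q, hq, rfl⟩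
      simp only [hD, mem_filter, mem_product, mem_powerset] at hq
      obtain ⟨-, hdisj, hsq, hcard⟩ := hq
      refine ⟨?_, ?_, ?_⟩
      · intro i
        simp only [hf]
        split_ifs <;> norm_num
      · have hthis := hsum q.1 q.2 hdisj
        rw [hsq, sub_self] at hthis
        exact hthis
      · rw [hsupp q, hcard]
  have hinj : Set.InjOn f ↑D := by
    intro q hq q' hq' hfe
    simp only [hD, mem_coe, mem_filter, mem_product, mem_powerset] at hq hq'
    have hmem1 : ∀ (r : Finset (Fin n) × Finset (Fin n)), Disjoint r.1 r.2 →
        ∀ i, i ∈ r.1 ↔ f r i = 1 := by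
      intro r hdisj i
      simp only [hf]
      constructor
      · intro h; rw [if_pos h]
      · intro h
        by_contra hc
        rw [if_neg hc] at h
        split_ifs at h <;> norm_num at h
    have hmem2 : ∀ (r : Finset (Fin n) × Finset (Fin n)), Disjoint r.1 r.2 →
        ∀ i, i ∈ r.2 ↔ f r i = -1 := by
      intro r hdisj i
      simp only [hf]
      constructor
      · intro h
        rw [if_neg (disjoint_right.mp hdisj h), if_pos h]
      · intro h
        split_ifs at h with h1 h2
        exact h2
    have e1 : q.1 = q'.1 := by
      ext i
      rw [hmem1 q hq.2.1 i, hmem1 q' hq'.2.1 i, hfe]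
    have e2 : q.2 = q'.2 := by
      ext i
      rw [hmem2 q hq.2.1 i, hmem2 q' hq'.2.1 i, hfe]
    exact Prod.ext e1 e2
  rw [hsetE, Set.ncard_coe_finset, card_image_of_injOn hinj]

/-- expected number of equal-sum pairs on a random half of [n]. -/
theorem stmt10 (n : ℕ) (hn : 0 < n) (hneven : Even n) (w : Fin n → ℤ) :
    (∑ L ∈ (Finset.univ : Finset (Fin n)).powersetCard (n / 2),
        (((L.powerset ×ˢ L.powerset).filter
          (fun p => ∑ i ∈ p.1, w i = ∑ i ∈ p.2, w i)).card : ℝ)) /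
      (((Finset.univ : Finset (Fin n)).powersetCard (n / 2)).card : ℝ)
    ≤ ∑ d ∈ Finset.range (n / 2 + 1),
        ({x : Fin n → ℤ | (∀ i, x i = -1 ∨ x i = 0 ∨ x i = 1) ∧ (∑ i, w i * x i = 0) ∧
            (Finset.univ.filter (fun i => x i ≠ 0)).card = d}.ncard : ℝ) *
          (((n - d).choose (n / 2 - d) : ℝ) / (n.choose (n / 2) : ℝ)) * 2 ^ (n / 2 - d) := by
  classical
  set k := n / 2 with hk
  have hkn : k ≤ n := Nat.div_le_self n 2
  have hnat := aux_main_count n k hkn w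
  have hden : (((Finset.univ : Finset (Fin n)).powersetCard k).card : ℝ)
      = (n.choose k : ℝ) := by
    rw [card_powersetCard, card_univ, Fintype.card_fin]
  apply le_of_eq
  rw [hden]
  have hnum : (∑ L ∈ (Finset.univ : Finset (Fin n)).powersetCard k,
      (((L.powerset ×ˢ L.powerset).filter
        (fun p => ∑ i ∈ p.1, w i = ∑ i ∈ p.2, w i)).card : ℝ))
      = ((∑ d ∈ Finset.range (k + 1),
        (((univ.powerset ×ˢ univ.powerset).filter
          (fun q : Finset (Fin n) × Finset (Fin n) =>
            Disjoint q.1 q.2 ∧ (∑ i ∈ q.1, w i = ∑ i ∈ q.2, w i) ∧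
            (q.1 ∪ q.2).card = d)).card) * (n - d).choose (k - d) * 2 ^ (k - d) : ℕ) : ℝ) := by
    rw [← hnat]
    push_cast
    rfl
  rw [hnum]
  push_cast
  rw [Finset.sum_div]
  apply sum_congr rfl
  intro d _
  rw [aux_ncard n w d]
  ring
end
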